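/- For nonnegative integers n, k with n ≥ k, the degenerate Stirling polynomial of the second kind satisfies S_{2,λ}(n,k|x) = (1/k!) Δ^k (x)_{n,λ}, where Δ is the forward difference operator in x; moreover (1/k!) Σ_{l=0}^k C(k,l)(-1)^{k-l} (l+x)_{n,λ} = 0 when n < k. -/

import Mathlib

open Finset PowerSeries

noncomputable section

/-- The generalized (degenerate) falling factorial `(x)_{n,λ} = ∏_{j<n} (x - jλ)`. -/
def dfall (x : ℝ) (n : ℕ) (lam : ℝ) : ℝ := ∏ j ∈ Finset.range n, (x - j * lam)

/-- The degenerate exponential `e_λ^x(t) = Σ_{n≥0} (x)_{n,λ} t^n / n!` as a formal power series. -/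
def degExp (lam x : ℝ) : PowerSeries ℝ :=
  PowerSeries.mk fun n => dfall x n lam / n.factorial

/-- The degenerate Stirling numbers of the second kind, defined by
`(1/k!)(e_λ(t)-1)^k = Σ_{n≥k} S_{2,λ}(n,k) t^n/n!`. -/
def S2 (lam : ℝ) (n k : ℕ) : ℝ :=
  (n.factorial : ℝ) / (k.factorial : ℝ) * PowerSeries.coeff n ((degExp lam 1 - 1) ^ k)

/-- The degenerate Stirling polynomials of the second kind, defined by
`(1/k!)(e_λ(t)-1)^k e_λ^x(t) = Σ_{n≥k} S_{2,λ}(n,k|x) t^n/n!`. -/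
def S2p (lam : ℝ) (n k : ℕ) (x : ℝ) : ℝ :=
  (n.factorial : ℝ) / (k.factorial : ℝ) *
    PowerSeries.coeff n ((degExp lam 1 - 1) ^ k * degExp lam x)

/-- The degenerate logarithm `log_λ(1+t) = Σ_{n≥1} λ^{n-1}(1)_{n,1/λ} t^n/n!`. -/
def degLog (lam : ℝ) : PowerSeries ℝ :=
  PowerSeries.mk fun n => if n = 0 then 0 else lam ^ (n - 1) * dfall 1 n (1 / lam) / n.factorial

/-- The degenerate Stirling numbers of the first kind, defined by
`(1/k!)(log_λ(1+t))^k = Σ_{n≥k} S_{1,λ}(n,k) t^n/n!`. -/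
def S1 (lam : ℝ) (n k : ℕ) : ℝ :=
  (n.factorial : ℝ) / (k.factorial : ℝ) * PowerSeries.coeff n ((degLog lam) ^ k)

/-- Rising factorial `⟨a⟩_k = a(a+1)⋯(a+k-1)`. -/
def rising (a : ℝ) (k : ℕ) : ℝ := ∏ j ∈ Finset.range k, (a + j)

/-- The generalized degenerate Bernoulli polynomials `β_{n,λ}^{(p)}(x)`, defined by
`Σ_{n≥0} β_{n,λ}^{(p)}(x) t^n/n! = ₂F₁(1-λ,1;p+2;1-e_λ(t)) e_λ^x(t)`.
Since `1 - e_λ(t)` has zero constant term, the coefficient of `t^n` in the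
hypergeometric series only involves the terms with `k ≤ n`. -/
def genBetaPoly (lam : ℝ) (p : ℤ) (x : ℝ) (n : ℕ) : ℝ :=
  (n.factorial : ℝ) * PowerSeries.coeff n
    ((∑ k ∈ Finset.range (n + 1),
        (rising (1 - lam) k * rising 1 k / (rising ((p : ℝ) + 2) k * k.factorial)) •
          ((1 - degExp lam 1) ^ k)) * degExp lam x)

/-- The generalized degenerate Bernoulli numbers `β_{n,λ}^{(p)} = β_{n,λ}^{(p)}(0)`. -/
def genBeta (lam : ℝ) (p : ℤ) (n : ℕ) : ℝ := genBetaPoly lam p 0 n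

/-- The degenerate type Eulerian numbers, defined by
`(-1)^{n-m} A_λ(n,m) = Σ_{k=0}^{n-m} λ^k (1)_{k+1,1/λ} C(n-k,m) S_{2,λ}(n,k)`. -/
def Eul (lam : ℝ) (n m : ℕ) : ℝ :=
  (-1 : ℝ) ^ (n - m) * ∑ k ∈ Finset.range (n - m + 1),
    lam ^ k * dfall 1 (k + 1) (1 / lam) * ((n - k).choose m : ℝ) * S2 lam n k

lemma dfall_succ' (x : ℝ) (n : ℕ) (lam : ℝ) :
    dfall x (n + 1) lam = dfall x n lam * (x - n * lam) := by
  simp [dfall, Finset.prod_range_succ]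

lemma dfall_add' (lam a b : ℝ) (n : ℕ) :
    dfall (a + b) n lam =
      ∑ j ∈ Finset.range (n + 1),
        (n.choose j : ℝ) * (dfall a j lam * dfall b (n - j) lam) := by
  induction n with
  | zero => simp [dfall]
  | succ n ih =>
    rw [dfall_succ', ih, Finset.sum_choose_succ_mul
      (fun i j => dfall a i lam * dfall b j lam) n, Finset.sum_mul, ← Finset.sum_add_distrib]
    refine Finset.sum_congr rfl fun i hi => ?_
    have hin : i ≤ n := by simpa [Nat.lt_succ_iff] using hi
    have h1 : dfall b (n + 1 - i) lam = dfall b (n - i) lam * (b - (n - i : ℕ) * lam) := by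
      rw [show n + 1 - i = (n - i) + 1 by omega, dfall_succ']
    have h2 : dfall a (i + 1) lam = dfall a i lam * (a - i * lam) := dfall_succ' ..
    have h3 : ((n - i : ℕ) : ℝ) = (n : ℝ) - i := by rw [Nat.cast_sub hin]
    rw [h1, h2, h3]; ring

lemma degExp_mul' (lam a b : ℝ) : degExp lam a * degExp lam b = degExp lam (a + b) := by
  ext n
  rw [PowerSeries.coeff_mul]
  simp only [degExp, PowerSeries.coeff_mk]
  rw [Finset.Nat.sum_antidiagonal_eq_sum_range_succ_mk, dfall_add', Finset.sum_div]
  refine Finset.sum_congr rfl fun i hi => ?_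
  have hin : i ≤ n := by simpa [Nat.lt_succ_iff] using hi
  rw [Nat.cast_choose ℝ hin]
  have h1 : (i.factorial : ℝ) ≠ 0 := Nat.cast_ne_zero.mpr (Nat.factorial_ne_zero _)
  have h2 : ((n - i).factorial : ℝ) ≠ 0 := Nat.cast_ne_zero.mpr (Nat.factorial_ne_zero _)
  have h3 : (n.factorial : ℝ) ≠ 0 := Nat.cast_ne_zero.mpr (Nat.factorial_ne_zero _)
  field_simp

lemma degExp_zero' (lam : ℝ) : degExp lam 0 = 1 := by
  ext n
  cases n with
  | zero => simp [degExp, dfall]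
  | succ n =>
    rw [PowerSeries.coeff_one]
    simp only [degExp, PowerSeries.coeff_mk, Nat.succ_ne_zero, if_false]
    have : dfall 0 (n + 1) lam = 0 := by
      refine Finset.prod_eq_zero (Finset.mem_range.mpr (Nat.succ_pos n)) ?_
      simp
    simp [this]

lemma degExp_pow' (lam : ℝ) (l : ℕ) : degExp lam 1 ^ l = degExp lam l := by
  induction l with
  | zero => simpa using (degExp_zero' lam).symm
  | succ l ih =>
    rw [pow_succ, ih, degExp_mul']
    push_cast
    rfl

lemma S2p_key (lam : ℝ) (n k : ℕ) (x : ℝ) :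
    S2p lam n k x =
      (1 / (k.factorial : ℝ)) *
        ∑ l ∈ Finset.range (k + 1),
          (k.choose l : ℝ) * (-1) ^ (k - l) * dfall (x + l) n lam := by
  have he : (degExp lam 1 - 1 : PowerSeries ℝ) ^ k * degExp lam x =
      ∑ l ∈ Finset.range (k + 1),
        ((k.choose l : ℝ) * (-1 : ℝ) ^ (k - l)) • degExp lam (x + l) := by
    rw [sub_eq_add_neg, add_pow, Finset.sum_mul]
    refine Finset.sum_congr rfl fun l hl => ?_
    rw [degExp_pow', PowerSeries.smul_eq_C_mul, ← degExp_mul', map_mul, map_pow, map_neg,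
      map_one, map_natCast]
    ring
  have h3 : (n.factorial : ℝ) ≠ 0 := Nat.cast_ne_zero.mpr (Nat.factorial_ne_zero _)
  unfold S2p
  rw [he, map_sum]
  simp only [PowerSeries.coeff_smul, smul_eq_mul]
  simp only [degExp, PowerSeries.coeff_mk]
  rw [Finset.mul_sum, Finset.mul_sum]
  refine Finset.sum_congr rfl fun l hl => ?_
  field_simp

theorem stmt14 (lam : ℝ) (n k : ℕ) (x : ℝ) :
    (k ≤ n →
      S2p lam n k x =
        (1 / (k.factorial : ℝ)) *
          ∑ l ∈ Finset.range (k + 1),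
            (k.choose l : ℝ) * (-1) ^ (k - l) * dfall (x + l) n lam) ∧
    (n < k →
      (1 / (k.factorial : ℝ)) *
          ∑ l ∈ Finset.range (k + 1),
            (k.choose l : ℝ) * (-1) ^ (k - l) * dfall (x + l) n lam = 0) := by
  constructor
  · intro _
    exact S2p_key lam n k x
  · intro hnk
    rw [← S2p_key lam n k x]
    have hc : PowerSeries.constantCoeff (degExp lam 1 - 1) = 0 := by
      simp [degExp, dfall]
    have hd : (PowerSeries.X : PowerSeries ℝ) ^ k ∣
        (degExp lam 1 - 1) ^ k * degExp lam x :=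
      dvd_mul_of_dvd_left (pow_dvd_pow_of_dvd (PowerSeries.X_dvd_iff.mpr hc) k) _
    have hz : PowerSeries.coeff n ((degExp lam 1 - 1) ^ k * degExp lam x) = 0 :=
      (PowerSeries.X_pow_dvd_iff.mp hd) n hnk
    unfold S2p
    rw [hz, mul_zero]
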